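/- Let u : ℝ → ℝ be concave with u(0) ≥ 0, and define M_u(ξ) := sup_{x ∈ ℝ} { u(x) + E[u(ξ - x)] }. Then M_u(δξ) ≤ δ M_u(ξ) for all δ ≥ 1, and M_u(δξ) ≥ δ M_u(ξ) for all δ ∈ (0, 1]. -/

import Mathlib

open MeasureTheory

private lemma key_concave {u : ℝ → ℝ} (hu : ConcaveOn ℝ Set.univ u) (h0 : 0 ≤ u 0)
    {t : ℝ} (ht0 : 0 < t) (ht1 : t ≤ 1) (y : ℝ) : t * u y ≤ u (t * y) := by
  have h := hu.2 (Set.mem_univ y) (Set.mem_univ (0:ℝ)) (le_of_lt ht0)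
    (by linarith : (0:ℝ) ≤ 1 - t) (by ring)
  simp only [smul_eq_mul, mul_zero, add_zero] at h
  nlinarith

theorem stmt5 {Ω : Type*} [MeasurableSpace Ω] (μ : Measure Ω) [IsProbabilityMeasure μ]
    (u : ℝ → ℝ) (hu : ConcaveOn ℝ Set.univ u) (h0 : 0 ≤ u 0) (ξ : Ω → ℝ)
    (hint : ∀ δ x : ℝ, Integrable (fun ω => u (δ * ξ ω - x)) μ)
    (hbdd : ∀ δ : ℝ, BddAbove {y : ℝ | ∃ x : ℝ, y = u x + ∫ ω, u (δ * ξ ω - x) ∂μ}) :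
    (∀ δ : ℝ, 1 ≤ δ →
        sSup {y : ℝ | ∃ x : ℝ, y = u x + ∫ ω, u (δ * ξ ω - x) ∂μ} ≤
          δ * sSup {y : ℝ | ∃ x : ℝ, y = u x + ∫ ω, u (ξ ω - x) ∂μ}) ∧
      (∀ δ : ℝ, 0 < δ → δ ≤ 1 →
        sSup {y : ℝ | ∃ x : ℝ, y = u x + ∫ ω, u (δ * ξ ω - x) ∂μ} ≥
          δ * sSup {y : ℝ | ∃ x : ℝ, y = u x + ∫ ω, u (ξ ω - x) ∂μ}) := by
  have hint1 : ∀ x : ℝ, Integrable (fun ω => u (ξ ω - x)) μ := by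
    intro x; simpa using hint 1 x
  have hb1 : BddAbove {y : ℝ | ∃ x : ℝ, y = u x + ∫ ω, u (ξ ω - x) ∂μ} := by
    have := hbdd 1; simpa using this
  have hne1 : {y : ℝ | ∃ x : ℝ, y = u x + ∫ ω, u (ξ ω - x) ∂μ}.Nonempty :=
    ⟨u 0 + ∫ ω, u (ξ ω - 0) ∂μ, 0, rfl⟩
  constructor
  · intro δ hδ
    have hδ0 : (0:ℝ) < δ := lt_of_lt_of_le one_pos hδ
    have hneδ : {y : ℝ | ∃ x : ℝ, y = u x + ∫ ω, u (δ * ξ ω - x) ∂μ}.Nonempty :=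
      ⟨u 0 + ∫ ω, u (δ * ξ ω - 0) ∂μ, 0, rfl⟩
    refine csSup_le hneδ ?_
    rintro y ⟨x, rfl⟩
    set x' := x / δ with hx'
    have hxx : δ * x' = x := by rw [hx']; exact mul_div_cancel₀ x (ne_of_gt hδ0)
    have ht0 : (0:ℝ) < 1/δ := by positivity
    have ht1 : 1/δ ≤ 1 := by rw [div_le_one hδ0]; exact hδ
    have hscale : ∀ z : ℝ, u (δ * z) ≤ δ * u z := by
      intro z
      have := key_concave hu h0 ht0 ht1 (δ * z)
      have hz : (1/δ) * (δ * z) = z := by field_simp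
      rw [hz] at this
      calc u (δ * z) = δ * ((1/δ) * u (δ * z)) := by field_simp
        _ ≤ δ * u z := mul_le_mul_of_nonneg_left this hδ0.le
    have h1 : u x ≤ δ * u x' := by rw [← hxx]; exact hscale x'
    have h2 : (∫ ω, u (δ * ξ ω - x) ∂μ) ≤ δ * ∫ ω, u (ξ ω - x') ∂μ := by
      rw [← integral_const_mul]
      refine integral_mono (hint δ x) ((hint1 x').const_mul δ) ?_
      intro ω
      have : δ * (ξ ω - x') = δ * ξ ω - x := by rw [← hxx]; ring
      simpa [this] using hscale (ξ ω - x')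
    have hmem : u x' + ∫ ω, u (ξ ω - x') ∂μ ≤
        sSup {y : ℝ | ∃ x : ℝ, y = u x + ∫ ω, u (ξ ω - x) ∂μ} :=
      le_csSup hb1 ⟨x', rfl⟩
    calc u x + ∫ ω, u (δ * ξ ω - x) ∂μ ≤ δ * (u x' + ∫ ω, u (ξ ω - x') ∂μ) := by
          rw [mul_add]; exact add_le_add h1 h2
      _ ≤ δ * sSup {y : ℝ | ∃ x : ℝ, y = u x + ∫ ω, u (ξ ω - x) ∂μ} :=
          mul_le_mul_of_nonneg_left hmem hδ0.le
  · intro δ hδ0 hδ1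
    have key : sSup {y : ℝ | ∃ x : ℝ, y = u x + ∫ ω, u (ξ ω - x) ∂μ} ≤
        (sSup {y : ℝ | ∃ x : ℝ, y = u x + ∫ ω, u (δ * ξ ω - x) ∂μ}) / δ := by
      refine csSup_le hne1 ?_
      rintro y ⟨x, rfl⟩
      rw [le_div_iff₀ hδ0, mul_comm]
      have h1 : δ * u x ≤ u (δ * x) := key_concave hu h0 hδ0 hδ1 x
      have h2 : δ * (∫ ω, u (ξ ω - x) ∂μ) ≤ ∫ ω, u (δ * ξ ω - δ * x) ∂μ := by
        rw [← integral_const_mul]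
        refine integral_mono ((hint1 x).const_mul δ) (hint δ (δ * x)) ?_
        intro ω
        have : δ * ξ ω - δ * x = δ * (ξ ω - x) := by ring
        simpa [this] using key_concave hu h0 hδ0 hδ1 (ξ ω - x)
      have hmem : u (δ * x) + ∫ ω, u (δ * ξ ω - δ * x) ∂μ ≤
          sSup {y : ℝ | ∃ x : ℝ, y = u x + ∫ ω, u (δ * ξ ω - x) ∂μ} :=
        le_csSup (hbdd δ) ⟨δ * x, rfl⟩
      calc δ * (u x + ∫ ω, u (ξ ω - x) ∂μ)
          ≤ u (δ * x) + ∫ ω, u (δ * ξ ω - δ * x) ∂μ := by rw [mul_add]; exact add_le_add h1 h2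
        _ ≤ _ := hmem
    have := mul_le_mul_of_nonneg_left key hδ0.le
    rw [mul_div_cancel₀ _ (ne_of_gt hδ0)] at this
    exact this
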